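/- Let 1 ≤ p < ∞. There exist constants c, C > 0, depending only on p, such that for every Lebesgue-measurable f : (0,∞) → ℝ: c · (∑_{j∈ℤ} 2^{j} (esssup_{t∈Δ_j} |f(t)|)^p)^{1/p} ≤ ‖f‖_{τL_p} ≤ C · (∑_{j∈ℤ} 2^{j} (esssup_{t∈Δ_j} |f(t)|)^p)^{1/p}, as an inequality of values in [0,∞]. -/

import Mathlib

open ENNReal MeasureTheory

/-- The Tandori norm `‖f‖_{τL_p} = (∫_0^∞ (esssup_{t≥x} |f(t)|)^p dx)^{1/p}`
of a function on `(0,∞)`, the essential supremum taken with respect to Lebesgue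
measure restricted to `[x,∞)`. -/
noncomputable def TLNorm (p : ℝ) (f : ℝ → ℝ) : ℝ≥0∞ :=
  (∫⁻ x in Set.Ioi (0 : ℝ),
      (essSup (fun t => ENNReal.ofReal |f t|) (volume.restrict (Set.Ici x))) ^ p) ^ (1 / p)

/-- The block form expression
`(∑_{j∈ℤ} 2^j (esssup_{t∈Δ_j} |f(t)|)^p)^{1/p}`, where `Δ_j = [2^j, 2^{j+1})`. -/
noncomputable def TLBlock (p : ℝ) (f : ℝ → ℝ) : ℝ≥0∞ :=
  (∑' j : ℤ, (2 : ℝ≥0∞) ^ j *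
      (essSup (fun t => ENNReal.ofReal |f t|)
        (volume.restrict (Set.Ico ((2 : ℝ) ^ j) ((2 : ℝ) ^ (j + 1))))) ^ p) ^ (1 / p)

/-! ### Auxiliary definitions and lemmas -/

/-- essential supremum of `|f|` over the dyadic block `Δ_k = [2^k, 2^{k+1})`. -/
noncomputable def blockSup (f : ℝ → ℝ) (k : ℤ) : ℝ≥0∞ :=
  essSup (fun t => ENNReal.ofReal |f t|)
    (volume.restrict (Set.Ico ((2 : ℝ) ^ k) ((2 : ℝ) ^ (k + 1))))

/-- essential supremum of `|f|` over the tail `[x,∞)`. -/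
noncomputable def tailSup (f : ℝ → ℝ) (x : ℝ) : ℝ≥0∞ :=
  essSup (fun t => ENNReal.ofReal |f t|) (volume.restrict (Set.Ici x))

lemma ofReal_two_zpow (j : ℤ) : ENNReal.ofReal ((2:ℝ)^j) = (2:ℝ≥0∞)^j := by
  rw [← Real.rpow_intCast, ← ENNReal.rpow_intCast, ← ENNReal.ofReal_ofNat,
    ENNReal.ofReal_rpow_of_pos (by norm_num)]

lemma vol_block (j : ℤ) : volume (Set.Ico ((2:ℝ)^j) ((2:ℝ)^(j+1))) = (2:ℝ≥0∞)^j := by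
  rw [Real.volume_Ico,
    show (2:ℝ)^(j+1) - 2^j = 2^j by rw [zpow_add₀ (by norm_num : (2:ℝ) ≠ 0)]; ring,
    ofReal_two_zpow]

lemma blocks_disjoint :
    Pairwise (Function.onFun Disjoint (fun j : ℤ => Set.Ico ((2:ℝ)^j) ((2:ℝ)^(j+1)))) := by
  intro j k hjk
  simp only [Function.onFun, Set.Ico_disjoint_Ico]
  rcases lt_or_gt_of_ne hjk with h | h
  · exact le_trans (min_le_left _ _) (le_max_of_le_right (zpow_le_zpow_right₀ one_le_two (by omega)))
  · exact le_trans (min_le_right _ _) (le_max_of_le_left (zpow_le_zpow_right₀ one_le_two (by omega)))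

lemma blocks_union : (⋃ j : ℤ, Set.Ico ((2:ℝ)^j) ((2:ℝ)^(j+1))) = Set.Ioi 0 := by
  ext x
  simp only [Set.mem_iUnion, Set.mem_Ico, Set.mem_Ioi]
  constructor
  · rintro ⟨j, h1, _⟩; exact lt_of_lt_of_le (zpow_pos (by norm_num) j) h1
  · intro hx; exact exists_mem_Ico_zpow hx one_lt_two

lemma Ici_eq_iUnion (j : ℤ) :
    Set.Ici ((2:ℝ)^j) = ⋃ n : ℕ, Set.Ico ((2:ℝ)^(j+(n:ℤ))) ((2:ℝ)^(j+(n:ℤ)+1)) := by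
  ext x
  simp only [Set.mem_iUnion, Set.mem_Ico, Set.mem_Ici]
  constructor
  · intro hx
    obtain ⟨k, h1, h2⟩ :=
      exists_mem_Ico_zpow (lt_of_lt_of_le (zpow_pos (by norm_num : (0:ℝ) < 2) j) hx) one_lt_two
    have hjk : j ≤ k := by
      by_contra h
      push_neg at h
      exact absurd (hx.trans_lt h2) (not_lt.2 (zpow_le_zpow_right₀ one_le_two h))
    refine ⟨(k - j).toNat, ?_, ?_⟩
    · rwa [show j + (((k-j).toNat : ℕ) : ℤ) = k by omega]
    · rwa [show j + (((k-j).toNat : ℕ) : ℤ) + 1 = k + 1 by omega]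
  · rintro ⟨n, h1, _⟩
    exact le_trans (zpow_le_zpow_right₀ one_le_two (by omega)) h1

lemma essSup_restrict_mono (g : ℝ → ℝ≥0∞) {s t : Set ℝ} (h : s ⊆ t) :
    essSup g (volume.restrict s) ≤ essSup g (volume.restrict t) :=
  essSup_mono_measure (Measure.absolutelyContinuous_of_le (Measure.restrict_mono h le_rfl))

lemma tsum_shift (g : ℤ → ℝ≥0∞) (n : ℤ) : ∑' j : ℤ, g (j + n) = ∑' k : ℤ, g k := by
  have := Equiv.tsum_eq (Equiv.addRight n) g
  simpa using this

lemma two_zpow_shift (n j : ℤ) (X : ℝ≥0∞) :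
    (2:ℝ≥0∞)^j * X = 2^(-n) * ((2:ℝ≥0∞)^(j+n) * X) := by
  rw [← mul_assoc, ← ENNReal.zpow_add two_ne_zero ENNReal.ofNat_ne_top,
    show -n + (j+n) = j by omega]

/-- Block form representation of the Tandori function space built on `L_p`. -/
theorem stmt_4 (p : ℝ) (hp : 1 ≤ p) :
    ∃ c C : ℝ, 0 < c ∧ 0 < C ∧ ∀ f : ℝ → ℝ, Measurable f →
      ENNReal.ofReal c * TLBlock p f ≤ TLNorm p f ∧
        TLNorm p f ≤ ENNReal.ofReal C * TLBlock p f := by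
  have hp0 : (0:ℝ) < p := lt_of_lt_of_le one_pos hp
  have hip : (0:ℝ) < 1/p := by positivity
  have hip1 : 1/p ≤ 1 := by rw [div_le_one hp0]; exact hp
  have hinv : ∀ x : ℝ≥0∞, (x ^ p) ^ (1/p) = x := fun x => by
    rw [← ENNReal.rpow_mul, mul_one_div, div_self hp0.ne', ENNReal.rpow_one]
  have hinv' : ∀ x : ℝ≥0∞, (x ^ (1/p)) ^ p = x := fun x => by
    rw [← ENNReal.rpow_mul, one_div, inv_mul_cancel₀ hp0.ne', ENNReal.rpow_one]
  refine ⟨1/2, 2, by norm_num, by norm_num, fun f _hf => ?_⟩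
  set S : ℝ≥0∞ := ∑' k : ℤ, (2:ℝ≥0∞)^k * blockSup f k ^ p with hSdef
  have hTB : TLBlock p f = S ^ (1/p) := rfl
  have hTN : TLNorm p f = (∫⁻ x in Set.Ioi (0:ℝ), tailSup f x ^ p) ^ (1/p) := rfl
  -- decomposition of the integral into blocks
  have hI : (∫⁻ x in Set.Ioi (0:ℝ), tailSup f x ^ p)
      = ∑' j : ℤ, ∫⁻ x in Set.Ico ((2:ℝ)^j) ((2:ℝ)^(j+1)), tailSup f x ^ p := by
    rw [← blocks_union, lintegral_iUnion (fun _ => measurableSet_Ico) blocks_disjoint]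
  -- lower bound per block
  have lower_block : ∀ j : ℤ, (2:ℝ≥0∞)^j * blockSup f (j+1) ^ p
      ≤ ∫⁻ x in Set.Ico ((2:ℝ)^j) ((2:ℝ)^(j+1)), tailSup f x ^ p := by
    intro j
    calc (2:ℝ≥0∞)^j * blockSup f (j+1) ^ p
        = blockSup f (j+1) ^ p * volume (Set.Ico ((2:ℝ)^j) ((2:ℝ)^(j+1))) := by
          rw [vol_block, mul_comm]
      _ = ∫⁻ _x in Set.Ico ((2:ℝ)^j) ((2:ℝ)^(j+1)), blockSup f (j+1) ^ p :=
          (setLIntegral_const _ _).symm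
      _ ≤ ∫⁻ x in Set.Ico ((2:ℝ)^j) ((2:ℝ)^(j+1)), tailSup f x ^ p := by
          apply lintegral_mono_ae
          filter_upwards [ae_restrict_mem measurableSet_Ico] with x hx
          refine ENNReal.rpow_le_rpow ?_ hp0.le
          refine essSup_restrict_mono _ (fun t ht => ?_)
          exact le_trans hx.2.le ht.1
  -- upper bound per block
  have upper_block : ∀ j : ℤ,
      (∫⁻ x in Set.Ico ((2:ℝ)^j) ((2:ℝ)^(j+1)), tailSup f x ^ p)
        ≤ (2:ℝ≥0∞)^j * ∑' n : ℕ, blockSup f (j+(n:ℤ)) ^ p := by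
    intro j
    have h1 : tailSup f ((2:ℝ)^j) ≤ (∑' n : ℕ, blockSup f (j+(n:ℤ)) ^ p) ^ (1/p) := by
      refine essSup_le_of_ae_le _ ?_
      rw [show Set.Ici ((2:ℝ)^j)
          = ⋃ n : ℕ, Set.Ico ((2:ℝ)^(j+(n:ℤ))) ((2:ℝ)^(j+(n:ℤ)+1)) from Ici_eq_iUnion j,
        ]
      refine (ae_restrict_iUnion_iff _ _).2 fun n => ?_
      filter_upwards [ENNReal.ae_le_essSup (fun t => ENNReal.ofReal |f t|)] with t ht
      refine ht.trans ?_
      rw [show essSup (fun t => ENNReal.ofReal |f t|)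
          (volume.restrict (Set.Ico ((2:ℝ)^(j+(n:ℤ))) ((2:ℝ)^(j+(n:ℤ)+1))))
          = blockSup f (j+(n:ℤ)) from rfl,
        ← hinv (blockSup f (j+(n:ℤ)))]
      exact ENNReal.rpow_le_rpow (ENNReal.le_tsum n) hip.le
    have hT : tailSup f ((2:ℝ)^j) ^ p ≤ ∑' n : ℕ, blockSup f (j+(n:ℤ)) ^ p := by
      calc tailSup f ((2:ℝ)^j) ^ p
          ≤ ((∑' n : ℕ, blockSup f (j+(n:ℤ)) ^ p) ^ (1/p)) ^ p :=
            ENNReal.rpow_le_rpow h1 hp0.le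
        _ = ∑' n : ℕ, blockSup f (j+(n:ℤ)) ^ p := hinv' _
    calc (∫⁻ x in Set.Ico ((2:ℝ)^j) ((2:ℝ)^(j+1)), tailSup f x ^ p)
        ≤ ∫⁻ _x in Set.Ico ((2:ℝ)^j) ((2:ℝ)^(j+1)), tailSup f ((2:ℝ)^j) ^ p := by
          apply lintegral_mono_ae
          filter_upwards [ae_restrict_mem measurableSet_Ico] with x hx
          exact ENNReal.rpow_le_rpow
            (essSup_restrict_mono _ (Set.Ici_subset_Ici.2 hx.1)) hp0.le
      _ = tailSup f ((2:ℝ)^j) ^ p * volume (Set.Ico ((2:ℝ)^j) ((2:ℝ)^(j+1))) :=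
          setLIntegral_const _ _
      _ = (2:ℝ≥0∞)^j * tailSup f ((2:ℝ)^j) ^ p := by rw [vol_block, mul_comm]
      _ ≤ (2:ℝ≥0∞)^j * ∑' n : ℕ, blockSup f (j+(n:ℤ)) ^ p := mul_le_mul_right hT _
  -- lower bound on the integral
  have hlow : 2⁻¹ * S ≤ ∫⁻ x in Set.Ioi (0:ℝ), tailSup f x ^ p := by
    rw [hI]
    refine le_trans (le_of_eq ?_) (ENNReal.tsum_le_tsum lower_block)
    calc 2⁻¹ * S = 2⁻¹ * ∑' j : ℤ, (2:ℝ≥0∞)^(j+1) * blockSup f (j+1) ^ p := by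
          rw [hSdef]
          exact congrArg (2⁻¹ * ·) (tsum_shift (fun k => (2:ℝ≥0∞)^k * blockSup f k ^ p) 1).symm
      _ = ∑' j : ℤ, 2⁻¹ * ((2:ℝ≥0∞)^(j+1) * blockSup f (j+1) ^ p) := ENNReal.tsum_mul_left.symm
      _ = ∑' j : ℤ, (2:ℝ≥0∞)^j * blockSup f (j+1) ^ p := by
          congr 1; funext j
          rw [show (2:ℝ≥0∞)⁻¹ = 2^(-1:ℤ) by rw [ENNReal.zpow_neg, zpow_one], ← two_zpow_shift 1 j]
  -- upper bound on the integral
  have hgeom : ∑' n : ℕ, (2:ℝ≥0∞)^(-(n:ℤ)) = 2 := by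
    have h : ∀ n : ℕ, (2:ℝ≥0∞)^(-(n:ℤ)) = (2⁻¹)^n := by
      intro n
      rw [ENNReal.zpow_neg, zpow_natCast, ← ENNReal.inv_pow]
    rw [tsum_congr h, ENNReal.tsum_geometric, ENNReal.one_sub_inv_two, inv_inv]
  have hup : (∫⁻ x in Set.Ioi (0:ℝ), tailSup f x ^ p) ≤ 2 * S := by
    rw [hI]
    calc (∑' j : ℤ, ∫⁻ x in Set.Ico ((2:ℝ)^j) ((2:ℝ)^(j+1)), tailSup f x ^ p)
        ≤ ∑' j : ℤ, (2:ℝ≥0∞)^j * ∑' n : ℕ, blockSup f (j+(n:ℤ)) ^ p :=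
          ENNReal.tsum_le_tsum upper_block
      _ = ∑' j : ℤ, ∑' n : ℕ, (2:ℝ≥0∞)^j * blockSup f (j+(n:ℤ)) ^ p := by
          congr 1; funext j; exact ENNReal.tsum_mul_left.symm
      _ = ∑' n : ℕ, ∑' j : ℤ, (2:ℝ≥0∞)^j * blockSup f (j+(n:ℤ)) ^ p := ENNReal.tsum_comm
      _ = ∑' n : ℕ, (2:ℝ≥0∞)^(-(n:ℤ)) * S := by
          congr 1; funext n
          calc (∑' j : ℤ, (2:ℝ≥0∞)^j * blockSup f (j+(n:ℤ)) ^ p)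
              = ∑' j : ℤ, (2:ℝ≥0∞)^(-(n:ℤ)) * ((2:ℝ≥0∞)^(j+(n:ℤ)) * blockSup f (j+(n:ℤ)) ^ p) := by
                congr 1; funext j; exact two_zpow_shift (n:ℤ) j _
            _ = (2:ℝ≥0∞)^(-(n:ℤ))
                  * ∑' j : ℤ, (2:ℝ≥0∞)^(j+(n:ℤ)) * blockSup f (j+(n:ℤ)) ^ p :=
                ENNReal.tsum_mul_left
            _ = (2:ℝ≥0∞)^(-(n:ℤ)) * S := by
                rw [hSdef]
                exact congrArg ((2:ℝ≥0∞)^(-(n:ℤ)) * ·)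
                  (tsum_shift (fun k => (2:ℝ≥0∞)^k * blockSup f k ^ p) (n:ℤ))
      _ = (∑' n : ℕ, (2:ℝ≥0∞)^(-(n:ℤ))) * S := ENNReal.tsum_mul_right
      _ = 2 * S := by rw [hgeom]
  constructor
  · -- lower inequality
    rw [hTB, hTN]
    have h2 : ENNReal.ofReal (1/2 : ℝ) = 2⁻¹ := by
      rw [one_div, ENNReal.ofReal_inv_of_pos (by norm_num), ENNReal.ofReal_ofNat]
    calc ENNReal.ofReal (1/2 : ℝ) * S ^ (1/p)
        = 2⁻¹ * S ^ (1/p) := by rw [h2]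
      _ ≤ (2⁻¹ : ℝ≥0∞) ^ (1/p) * S ^ (1/p) := by
          refine mul_le_mul_left ?_ _
          calc (2⁻¹ : ℝ≥0∞) = (2⁻¹ : ℝ≥0∞) ^ (1:ℝ) := (ENNReal.rpow_one _).symm
            _ ≤ (2⁻¹ : ℝ≥0∞) ^ (1/p) :=
              ENNReal.rpow_le_rpow_of_exponent_ge (by norm_num) hip1
      _ = (2⁻¹ * S) ^ (1/p) := (ENNReal.mul_rpow_of_nonneg _ _ hip.le).symm
      _ ≤ (∫⁻ x in Set.Ioi (0:ℝ), tailSup f x ^ p) ^ (1/p) :=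
          ENNReal.rpow_le_rpow hlow hip.le
  · -- upper inequality
    rw [hTB, hTN]
    calc (∫⁻ x in Set.Ioi (0:ℝ), tailSup f x ^ p) ^ (1/p)
        ≤ (2 * S) ^ (1/p) := ENNReal.rpow_le_rpow hup hip.le
      _ = (2:ℝ≥0∞) ^ (1/p) * S ^ (1/p) := ENNReal.mul_rpow_of_nonneg _ _ hip.le
      _ ≤ 2 * S ^ (1/p) := by
          refine mul_le_mul_left ?_ _
          calc (2:ℝ≥0∞) ^ (1/p) ≤ (2:ℝ≥0∞) ^ (1:ℝ) :=
              ENNReal.rpow_le_rpow_of_exponent_le (by norm_num) hip1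
            _ = 2 := ENNReal.rpow_one _
      _ = ENNReal.ofReal 2 * S ^ (1/p) := by rw [ENNReal.ofReal_ofNat]
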